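/- Let ω = P dx + Q dy with P, Q formal power series of order ≥ ν, and let ω' = P' dx + Q' dy with P', Q' of order ≥ ν. Let Φ = id + Φⁿ + (higher order terms) be a formal diffeomorphism of (ℂ²,0) tangent to the identity whose lowest nonidentity homogeneous component Φⁿ has degree n ≥ 2. Then Φ*ω ∧ ω' − ω ∧ ω' − (L_{∂Φⁿ} ω^ν) ∧ ω'^ν has order at least n + 2ν, where ω^ν, ω'^ν denote the lowest (degree-ν) homogeneous components and ∂Φⁿ is the vector field with components Φⁿ. -/

import Mathlib

/-- Total degree of a monomial exponent in two variables. -/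
def mdeg (d : Fin 2 →₀ ℕ) : ℕ := d 0 + d 1

/-- `ordGE n f`: the formal power series `f ∈ ℂ[[x,y]]` has order `≥ n`. -/
def ordGE (n : ℕ) (f : MvPowerSeries (Fin 2) ℂ) : Prop :=
  ∀ d, mdeg d < n → MvPowerSeries.coeff d f = 0

/-- `f` is homogeneous of degree `n` (as a power series: supported in degree `n`). -/
def isHomogPS (n : ℕ) (f : MvPowerSeries (Fin 2) ℂ) : Prop :=
  ∀ d, mdeg d ≠ n → MvPowerSeries.coeff d f = 0

/-- The degree-`n` homogeneous part of a formal power series. -/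
noncomputable def hpart (n : ℕ) (f : MvPowerSeries (Fin 2) ℂ) :
    MvPowerSeries (Fin 2) ℂ :=
  fun d => if mdeg d = n then MvPowerSeries.coeff d f else 0

/-- Formal partial derivative `∂/∂xᵢ` on `ℂ[[x,y]]`. -/
noncomputable def pd (i : Fin 2) (f : MvPowerSeries (Fin 2) ℂ) :
    MvPowerSeries (Fin 2) ℂ :=
  fun d => ((d i : ℂ) + 1) * MvPowerSeries.coeff (d + Finsupp.single i 1) f

/-- Substitution `f(φ, ψ)` for `φ, ψ` of positive order: the coefficient of a
monomial of total degree `m` only involves `φ^i ψ^j` with `i + j ≤ m`. -/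
noncomputable def compPS (φ ψ f : MvPowerSeries (Fin 2) ℂ) :
    MvPowerSeries (Fin 2) ℂ :=
  fun d => ∑ i ∈ Finset.range (mdeg d + 1), ∑ j ∈ Finset.range (mdeg d + 1),
    MvPowerSeries.coeff (Finsupp.single 0 i + Finsupp.single 1 j) f *
      MvPowerSeries.coeff d (φ ^ i * ψ ^ j)

open MvPowerSeries

section aux
variable {f g u v : MvPowerSeries (Fin 2) ℂ} {m k l n ν : ℕ}

lemma mdeg_add (p q : Fin 2 →₀ ℕ) : mdeg (p + q) = mdeg p + mdeg q := by
  simp [mdeg]; ring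

lemma mdeg_single (i : Fin 2) (k : ℕ) : mdeg (Finsupp.single i k) = k := by
  fin_cases i <;> simp [mdeg]

lemma fin2_decomp (d : Fin 2 →₀ ℕ) :
    d = Finsupp.single 0 (d 0) + Finsupp.single 1 (d 1) := by
  ext i; fin_cases i <;> simp

lemma mdeg_eq_zero {d : Fin 2 →₀ ℕ} (h : mdeg d = 0) : d = 0 := by
  have h0 : d 0 = 0 ∧ d 1 = 0 := by unfold mdeg at h; omega
  ext i; fin_cases i <;> simp [h0.1, h0.2]

lemma coeff_pd (i : Fin 2) (d : Fin 2 →₀ ℕ) (f : MvPowerSeries (Fin 2) ℂ) :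
    MvPowerSeries.coeff d (pd i f)
      = ((d i : ℂ) + 1) * MvPowerSeries.coeff (d + Finsupp.single i 1) f := rfl

lemma coeff_hpart (d : Fin 2 →₀ ℕ) :
    MvPowerSeries.coeff d (hpart n f)
      = if mdeg d = n then MvPowerSeries.coeff d f else 0 := rfl

lemma coeff_compPS (φ ψ f : MvPowerSeries (Fin 2) ℂ) (d : Fin 2 →₀ ℕ) :
    MvPowerSeries.coeff d (compPS φ ψ f)
      = ∑ i ∈ Finset.range (mdeg d + 1), ∑ j ∈ Finset.range (mdeg d + 1),
        MvPowerSeries.coeff (Finsupp.single 0 i + Finsupp.single 1 j) f *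
          MvPowerSeries.coeff d (φ ^ i * ψ ^ j) := rfl

lemma ordGE_mono (h : m ≤ k) (hf : ordGE k f) : ordGE m f :=
  fun d hd => hf d (lt_of_lt_of_le hd h)

lemma ordGE_zero (m : ℕ) : ordGE m (0 : MvPowerSeries (Fin 2) ℂ) := by
  intro d _; simp

lemma ordGE_add (hf : ordGE m f) (hg : ordGE m g) : ordGE m (f + g) := by
  intro d hd; rw [map_add, hf d hd, hg d hd, add_zero]

lemma ordGE_sub (hf : ordGE m f) (hg : ordGE m g) : ordGE m (f - g) := by
  intro d hd; rw [map_sub, hf d hd, hg d hd, sub_zero]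

lemma ordGE_mul (hf : ordGE m f) (hg : ordGE k g) : ordGE (m + k) (f * g) := by
  intro d hd
  rw [MvPowerSeries.coeff_mul]
  apply Finset.sum_eq_zero
  intro p hp
  rw [Finset.HasAntidiagonal.mem_antidiagonal] at hp
  have hm : mdeg p.1 + mdeg p.2 = mdeg d := by rw [← mdeg_add, hp]
  by_cases h1 : mdeg p.1 < m
  · rw [hf _ h1, zero_mul]
  · rw [hg _ (by omega), mul_zero]

lemma ordGE_mul' (h : l ≤ m + k) (hf : ordGE m f) (hg : ordGE k g) :
    ordGE l (f * g) := ordGE_mono h (ordGE_mul hf hg)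

lemma ordGE_C_mul (c : ℂ) (hf : ordGE m f) :
    ordGE m (MvPowerSeries.C (σ := Fin 2) (R := ℂ) c * f) := by
  intro d hd; rw [MvPowerSeries.coeff_C_mul, hf d hd, mul_zero]

lemma ordGE_X_pow (s : Fin 2) (i : ℕ) :
    ordGE i ((MvPowerSeries.X s : MvPowerSeries (Fin 2) ℂ) ^ i) := by
  intro d hd
  rw [MvPowerSeries.X_pow_eq, MvPowerSeries.coeff_monomial, if_neg]
  intro h; subst h; rw [mdeg_single] at hd; omega

lemma ordGE_X (s : Fin 2) :
    ordGE 1 ((MvPowerSeries.X s : MvPowerSeries (Fin 2) ℂ)) := by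
  have := ordGE_X_pow s 1; rwa [pow_one] at this

lemma ordGE_of_homog (ha : isHomogPS n f) : ordGE n f :=
  fun d hd => ha d (by omega)

lemma ordGE_hpart (ν : ℕ) (f : MvPowerSeries (Fin 2) ℂ) : ordGE ν (hpart ν f) := by
  intro d hd; rw [coeff_hpart, if_neg (by omega)]

lemma ordGE_sub_hpart (hf : ordGE ν f) : ordGE (ν + 1) (f - hpart ν f) := by
  intro d hd
  rw [map_sub, coeff_hpart]
  by_cases h : mdeg d = ν
  · rw [if_pos h, sub_self]
  · rw [if_neg h, sub_zero]; exact hf d (by omega)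

lemma pd_add (i : Fin 2) (f g : MvPowerSeries (Fin 2) ℂ) :
    pd i (f + g) = pd i f + pd i g := by
  funext d
  show ((d i : ℂ) + 1) * MvPowerSeries.coeff _ (f + g) = _
  rw [map_add]
  show _ = ((d i : ℂ) + 1) * _ + ((d i : ℂ) + 1) * _
  ring

lemma pd_sub (i : Fin 2) (f g : MvPowerSeries (Fin 2) ℂ) :
    pd i (f - g) = pd i f - pd i g := by
  funext d
  show ((d i : ℂ) + 1) * MvPowerSeries.coeff _ (f - g) = _
  rw [map_sub]
  show _ = ((d i : ℂ) + 1) * _ - ((d i : ℂ) + 1) * _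
  ring

lemma ordGE_pd (i : Fin 2) (hf : ordGE m f) : ordGE (m - 1) (pd i f) := by
  intro d hd
  rw [coeff_pd, hf _ (by rw [mdeg_add, mdeg_single]; omega), mul_zero]

lemma pd_X_self (i : Fin 2) : pd i (MvPowerSeries.X i) = 1 := by
  funext d
  show MvPowerSeries.coeff d (pd i (MvPowerSeries.X i)) = MvPowerSeries.coeff d 1
  rw [coeff_pd, MvPowerSeries.coeff_X, MvPowerSeries.coeff_one]
  by_cases hd : d = 0
  · subst hd; simp
  · rw [if_neg (fun h => hd (add_eq_right.mp h)), if_neg hd, mul_zero]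

lemma pd_X_ne {i j : Fin 2} (h : j ≠ i) : pd i (MvPowerSeries.X j) = 0 := by
  funext d
  show MvPowerSeries.coeff d (pd i (MvPowerSeries.X j)) = MvPowerSeries.coeff d 0
  rw [coeff_pd, MvPowerSeries.coeff_X, if_neg, mul_zero, map_zero]
  intro hc
  have := congrArg (fun z : Fin 2 →₀ ℕ => z i) hc
  simp [Finsupp.single_apply, h] at this

end aux

section expand
open MvPowerSeries
variable {n : ℕ} {g u v : MvPowerSeries (Fin 2) ℂ}

lemma expand_pow (s : Fin 2) (hn : 2 ≤ n) (hg : ordGE n g) (i : ℕ) :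
    ordGE (i + n) ((MvPowerSeries.X s + g) ^ i - MvPowerSeries.X s ^ i -
      MvPowerSeries.C (σ := Fin 2) (R := ℂ) (i : ℂ) * (MvPowerSeries.X s ^ (i - 1) * g)) := by
  induction i with
  | zero =>
      have : (MvPowerSeries.X s (R := ℂ) + g) ^ 0 - MvPowerSeries.X s ^ 0 -
        MvPowerSeries.C (σ := Fin 2) (R := ℂ) ((0 : ℕ) : ℂ) * (MvPowerSeries.X s ^ (0 - 1) * g) = 0 := by
        simp
      rw [this]; exact ordGE_zero _
  | succ i ih =>
      set R := (MvPowerSeries.X s (R := ℂ) + g) ^ i - MvPowerSeries.X s ^ i -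
        MvPowerSeries.C (σ := Fin 2) (R := ℂ) (i : ℂ) * (MvPowerSeries.X s ^ (i - 1) * g) with hR
      have hX : MvPowerSeries.C (σ := Fin 2) (R := ℂ) (i : ℂ) *
          ((MvPowerSeries.X s * MvPowerSeries.X s ^ (i - 1) - MvPowerSeries.X s ^ i) * g) = 0 := by
        cases i with
        | zero => simp
        | succ k =>
            have : MvPowerSeries.X s (R := ℂ) * MvPowerSeries.X s ^ (k + 1 - 1)
                = MvPowerSeries.X s ^ (k + 1) := by
              rw [Nat.add_sub_cancel, pow_succ, mul_comm]
            rw [this, sub_self, zero_mul, mul_zero]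
      have hC : MvPowerSeries.C (σ := Fin 2) (R := ℂ) ((i + 1 : ℕ) : ℂ)
          = MvPowerSeries.C (σ := Fin 2) (R := ℂ) (i : ℂ) + 1 := by
        push_cast; rw [map_add, map_one]
      have hrw : (MvPowerSeries.X s (R := ℂ) + g) ^ (i + 1) - MvPowerSeries.X s ^ (i + 1) -
          MvPowerSeries.C (σ := Fin 2) (R := ℂ) ((i + 1 : ℕ) : ℂ) * (MvPowerSeries.X s ^ (i + 1 - 1) * g)
          = MvPowerSeries.X s * R
            + MvPowerSeries.C (σ := Fin 2) (R := ℂ) (i : ℂ) * (MvPowerSeries.X s ^ (i - 1) * (g * g))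
            + g * R
            + MvPowerSeries.C (σ := Fin 2) (R := ℂ) (i : ℂ) *
              ((MvPowerSeries.X s * MvPowerSeries.X s ^ (i - 1) - MvPowerSeries.X s ^ i) * g) := by
        rw [hC, hR, Nat.add_sub_cancel, pow_succ]
        ring
      rw [hrw, hX, add_zero]
      apply ordGE_add
      apply ordGE_add
      · exact ordGE_mul' (by omega) (ordGE_X s) ih
      · exact ordGE_mono (by omega) (ordGE_C_mul _
          (ordGE_mul (ordGE_X_pow s (i-1)) (ordGE_mul hg hg)))
      · exact ordGE_mul' (by omega) (ordGE_mono (le_refl n) hg) ih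

lemma monomial_eq_C_mul (s t : Fin 2) (i j : ℕ) (c : ℂ) :
    (MvPowerSeries.monomial (Finsupp.single s i + Finsupp.single t j)) c
      = MvPowerSeries.C (σ := Fin 2) (R := ℂ) c *
        ((MvPowerSeries.X s : MvPowerSeries (Fin 2) ℂ) ^ i * MvPowerSeries.X t ^ j) := by
  rw [MvPowerSeries.X_pow_eq, MvPowerSeries.X_pow_eq, MvPowerSeries.monomial_mul_monomial,
    ← MvPowerSeries.monomial_zero_eq_C_apply, MvPowerSeries.monomial_mul_monomial]
  simp

lemma prod_expand (hn : 2 ≤ n) (hu : ordGE n u) (hv : ordGE n v) (i j : ℕ) :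
    ordGE (i + j + n)
      ((MvPowerSeries.X 0 + u) ^ i * (MvPowerSeries.X 1 + v) ^ j
        - MvPowerSeries.monomial (Finsupp.single 0 i + Finsupp.single 1 j) (1 : ℂ)
        - MvPowerSeries.monomial (Finsupp.single 0 (i - 1) + Finsupp.single 1 j) ((i : ℂ)) * u
        - MvPowerSeries.monomial (Finsupp.single 0 i + Finsupp.single 1 (j - 1)) ((j : ℂ)) * v) := by
  set X0 := (MvPowerSeries.X 0 : MvPowerSeries (Fin 2) ℂ)
  set X1 := (MvPowerSeries.X 1 : MvPowerSeries (Fin 2) ℂ)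
  set R := (X0 + u) ^ i - X0 ^ i - MvPowerSeries.C (σ := Fin 2) (R := ℂ) (i : ℂ) * (X0 ^ (i - 1) * u) with hRdef
  set S := (X1 + v) ^ j - X1 ^ j - MvPowerSeries.C (σ := Fin 2) (R := ℂ) (j : ℂ) * (X1 ^ (j - 1) * v) with hSdef
  have hR : ordGE (i + n) R := expand_pow 0 hn hu i
  have hS : ordGE (j + n) S := expand_pow 1 hn hv j
  have hrw : (X0 + u) ^ i * (X1 + v) ^ j
      - MvPowerSeries.monomial (Finsupp.single 0 i + Finsupp.single 1 j) (1 : ℂ)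
      - MvPowerSeries.monomial (Finsupp.single 0 (i - 1) + Finsupp.single 1 j) ((i : ℂ)) * u
      - MvPowerSeries.monomial (Finsupp.single 0 i + Finsupp.single 1 (j - 1)) ((j : ℂ)) * v
      = (MvPowerSeries.C (σ := Fin 2) (R := ℂ) (i : ℂ) * (X0 ^ (i - 1) * u)) *
          (MvPowerSeries.C (σ := Fin 2) (R := ℂ) (j : ℂ) * (X1 ^ (j - 1) * v))
        + X0 ^ i * S
        + (MvPowerSeries.C (σ := Fin 2) (R := ℂ) (i : ℂ) * (X0 ^ (i - 1) * u)) * S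
        + R * X1 ^ j
        + R * (MvPowerSeries.C (σ := Fin 2) (R := ℂ) (j : ℂ) * (X1 ^ (j - 1) * v))
        + R * S := by
    rw [monomial_eq_C_mul, monomial_eq_C_mul, monomial_eq_C_mul, map_one, one_mul, hRdef, hSdef]
    ring
  rw [hrw]
  have hc1 : ordGE (i - 1 + n) (MvPowerSeries.C (σ := Fin 2) (R := ℂ) (i : ℂ) * (X0 ^ (i - 1) * u)) :=
    ordGE_C_mul _ (ordGE_mul (ordGE_X_pow 0 _) hu)
  have hc2 : ordGE (j - 1 + n) (MvPowerSeries.C (σ := Fin 2) (R := ℂ) (j : ℂ) * (X1 ^ (j - 1) * v)) :=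
    ordGE_C_mul _ (ordGE_mul (ordGE_X_pow 1 _) hv)
  apply ordGE_add; apply ordGE_add; apply ordGE_add; apply ordGE_add; apply ordGE_add
  · exact ordGE_mul' (by omega) hc1 hc2
  · exact ordGE_mul' (by omega) (ordGE_X_pow 0 i) hS
  · exact ordGE_mul' (by omega) hc1 hS
  · exact ordGE_mul' (by omega) hR (ordGE_X_pow 1 j)
  · exact ordGE_mul' (by omega) hR hc2
  · exact ordGE_mul' (by omega) hR hS
end expand

section sums
open MvPowerSeries Finset
variable {n : ℕ} {u v : MvPowerSeries (Fin 2) ℂ}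

lemma pair_app0 (i j : ℕ) :
    ((Finsupp.single (0 : Fin 2) i + Finsupp.single 1 j : Fin 2 →₀ ℕ)) 0 = i := by
  simp [Finsupp.single_apply]

lemma pair_app1 (i j : ℕ) :
    ((Finsupp.single (0 : Fin 2) i + Finsupp.single 1 j : Fin 2 →₀ ℕ)) 1 = j := by
  simp [Finsupp.single_apply]

lemma q0_le_mdeg (q : Fin 2 →₀ ℕ) : q 0 ≤ mdeg q ∧ q 1 ≤ mdeg q := by
  unfold mdeg; omega

lemma sum_M00 (f : MvPowerSeries (Fin 2) ℂ) (d : Fin 2 →₀ ℕ) :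
    ∑ i ∈ range (mdeg d + 1), ∑ j ∈ range (mdeg d + 1),
      MvPowerSeries.coeff (Finsupp.single 0 i + Finsupp.single 1 j) f *
        MvPowerSeries.coeff d
          (MvPowerSeries.monomial (Finsupp.single 0 i + Finsupp.single 1 j) (1 : ℂ))
      = MvPowerSeries.coeff d f := by
  rw [Finset.sum_eq_single (d 0)]
  · rw [Finset.sum_eq_single (d 1)]
    · rw [MvPowerSeries.coeff_monomial, if_pos (fin2_decomp d), mul_one, ← fin2_decomp]
    · intro j _ hne
      rw [MvPowerSeries.coeff_monomial, if_neg, mul_zero]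
      intro h; exact hne ((congrArg (fun z : Fin 2 →₀ ℕ => z 1) h).trans (pair_app1 _ _)).symm
    · intro h; exact absurd (Finset.mem_range.mpr (by have := q0_le_mdeg d; omega)) h
  · intro i _ hne
    apply Finset.sum_eq_zero; intro j _
    rw [MvPowerSeries.coeff_monomial, if_neg, mul_zero]
    intro h; exact hne ((congrArg (fun z : Fin 2 →₀ ℕ => z 0) h).trans (pair_app0 _ _)).symm
  · intro h; exact absurd (Finset.mem_range.mpr (by have := q0_le_mdeg d; omega)) h

lemma sum_M10 (hn : 1 ≤ n) (hu : ordGE n u) (f : MvPowerSeries (Fin 2) ℂ) (d : Fin 2 →₀ ℕ) :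
    ∑ i ∈ range (mdeg d + 1), ∑ j ∈ range (mdeg d + 1),
      MvPowerSeries.coeff (Finsupp.single 0 i + Finsupp.single 1 j) f *
        MvPowerSeries.coeff d
          (MvPowerSeries.monomial (Finsupp.single 0 (i - 1) + Finsupp.single 1 j) ((i : ℂ)) * u)
      = MvPowerSeries.coeff d (pd 0 f * u) := by
  set m := mdeg d with hm
  -- rewrite each term as the coefficient of a monomial (with merged scalar) times u
  have hstep : ∀ i j : ℕ,
      MvPowerSeries.coeff (Finsupp.single 0 i + Finsupp.single 1 j) f *
        MvPowerSeries.coeff d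
          (MvPowerSeries.monomial (Finsupp.single 0 (i - 1) + Finsupp.single 1 j) ((i : ℂ)) * u)
      = MvPowerSeries.coeff d
          (MvPowerSeries.monomial (Finsupp.single 0 (i - 1) + Finsupp.single 1 j)
            (MvPowerSeries.coeff (Finsupp.single 0 i + Finsupp.single 1 j) f * (i : ℂ)) * u) := by
    intro i j
    rw [MvPowerSeries.coeff_monomial_mul, MvPowerSeries.coeff_monomial_mul]
    split_ifs <;> ring
  set G : MvPowerSeries (Fin 2) ℂ := ∑ i ∈ range (m + 1), ∑ j ∈ range (m + 1),
      MvPowerSeries.monomial (Finsupp.single 0 (i - 1) + Finsupp.single 1 j)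
        (MvPowerSeries.coeff (Finsupp.single 0 i + Finsupp.single 1 j) f * (i : ℂ)) with hG
  have hGu : ∑ i ∈ range (m + 1), ∑ j ∈ range (m + 1),
      MvPowerSeries.coeff (Finsupp.single 0 i + Finsupp.single 1 j) f *
        MvPowerSeries.coeff d
          (MvPowerSeries.monomial (Finsupp.single 0 (i - 1) + Finsupp.single 1 j) ((i : ℂ)) * u)
      = MvPowerSeries.coeff d (G * u) := by
    rw [hG, Finset.sum_mul, map_sum]
    refine Finset.sum_congr rfl fun i _ => ?_
    rw [Finset.sum_mul, map_sum]
    exact Finset.sum_congr rfl fun j _ => hstep i j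
  rw [hGu]
  -- now compare coefficients of G and pd 0 f on the antidiagonal
  rw [MvPowerSeries.coeff_mul, MvPowerSeries.coeff_mul]
  refine Finset.sum_congr rfl fun p hp => ?_
  rw [Finset.HasAntidiagonal.mem_antidiagonal] at hp
  by_cases hp2 : p.2 = 0
  · rw [hu p.2 (by rw [hp2]; show mdeg 0 < n; simp [mdeg]; omega), mul_zero, mul_zero]
  · have hq : mdeg p.1 < m := by
      have h2 : mdeg p.2 ≠ 0 := fun h => hp2 (mdeg_eq_zero h)
      have : mdeg p.1 + mdeg p.2 = m := by rw [hm, ← hp, mdeg_add]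
      omega
    congr 1
    -- coeff p.1 G = coeff p.1 (pd 0 f)
    set q := p.1 with hqdef
    have hq0 : q 0 < m := by have := q0_le_mdeg q; omega
    have hq1 : q 1 < m := by have := q0_le_mdeg q; omega
    rw [hG, map_sum]
    rw [Finset.sum_eq_single (q 0 + 1)]
    · rw [map_sum, Finset.sum_eq_single (q 1)]
      · rw [MvPowerSeries.coeff_monomial, if_pos (by rw [Nat.add_sub_cancel]; exact fin2_decomp q)]
        rw [coeff_pd]
        have hqq : q + Finsupp.single 0 1 = Finsupp.single 0 (q 0 + 1) + Finsupp.single 1 (q 1) := by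
          ext ii; fin_cases ii <;> simp [Finsupp.single_apply]
        rw [hqq]
        push_cast; ring
      · intro j _ hne
        rw [MvPowerSeries.coeff_monomial, if_neg]
        intro h
        exact hne ((congrArg (fun z : Fin 2 →₀ ℕ => z 1) h).trans (pair_app1 _ _)).symm
      · intro h; exact absurd (Finset.mem_range.mpr (by omega)) h
    · intro i _ hne
      rw [map_sum]
      apply Finset.sum_eq_zero; intro j _
      rw [MvPowerSeries.coeff_monomial]
      by_cases h : q = Finsupp.single 0 (i - 1) + Finsupp.single 1 j
      · have h0 : q 0 = i - 1 := (congrArg (fun z : Fin 2 →₀ ℕ => z 0) h).trans (pair_app0 _ _)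
        have hi0 : i = 0 := by omega
        rw [if_pos h, hi0, Nat.cast_zero, mul_zero]
      · rw [if_neg h]
    · intro h; exact absurd (Finset.mem_range.mpr (by omega)) h

lemma sum_M01 (hn : 1 ≤ n) (hv : ordGE n v) (f : MvPowerSeries (Fin 2) ℂ) (d : Fin 2 →₀ ℕ) :
    ∑ i ∈ range (mdeg d + 1), ∑ j ∈ range (mdeg d + 1),
      MvPowerSeries.coeff (Finsupp.single 0 i + Finsupp.single 1 j) f *
        MvPowerSeries.coeff d
          (MvPowerSeries.monomial (Finsupp.single 0 i + Finsupp.single 1 (j - 1)) ((j : ℂ)) * v)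
      = MvPowerSeries.coeff d (pd 1 f * v) := by
  set m := mdeg d with hm
  have hstep : ∀ i j : ℕ,
      MvPowerSeries.coeff (Finsupp.single 0 i + Finsupp.single 1 j) f *
        MvPowerSeries.coeff d
          (MvPowerSeries.monomial (Finsupp.single 0 i + Finsupp.single 1 (j - 1)) ((j : ℂ)) * v)
      = MvPowerSeries.coeff d
          (MvPowerSeries.monomial (Finsupp.single 0 i + Finsupp.single 1 (j - 1))
            (MvPowerSeries.coeff (Finsupp.single 0 i + Finsupp.single 1 j) f * (j : ℂ)) * v) := by
    intro i j
    rw [MvPowerSeries.coeff_monomial_mul, MvPowerSeries.coeff_monomial_mul]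
    split_ifs <;> ring
  set G : MvPowerSeries (Fin 2) ℂ := ∑ i ∈ range (m + 1), ∑ j ∈ range (m + 1),
      MvPowerSeries.monomial (Finsupp.single 0 i + Finsupp.single 1 (j - 1))
        (MvPowerSeries.coeff (Finsupp.single 0 i + Finsupp.single 1 j) f * (j : ℂ)) with hG
  have hGu : ∑ i ∈ range (m + 1), ∑ j ∈ range (m + 1),
      MvPowerSeries.coeff (Finsupp.single 0 i + Finsupp.single 1 j) f *
        MvPowerSeries.coeff d
          (MvPowerSeries.monomial (Finsupp.single 0 i + Finsupp.single 1 (j - 1)) ((j : ℂ)) * v)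
      = MvPowerSeries.coeff d (G * v) := by
    rw [hG, Finset.sum_mul, map_sum]
    refine Finset.sum_congr rfl fun i _ => ?_
    rw [Finset.sum_mul, map_sum]
    exact Finset.sum_congr rfl fun j _ => hstep i j
  rw [hGu]
  rw [MvPowerSeries.coeff_mul, MvPowerSeries.coeff_mul]
  refine Finset.sum_congr rfl fun p hp => ?_
  rw [Finset.HasAntidiagonal.mem_antidiagonal] at hp
  by_cases hp2 : p.2 = 0
  · rw [hv p.2 (by rw [hp2]; show mdeg 0 < n; simp [mdeg]; omega), mul_zero, mul_zero]
  · have hq : mdeg p.1 < m := by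
      have h2 : mdeg p.2 ≠ 0 := fun h => hp2 (mdeg_eq_zero h)
      have : mdeg p.1 + mdeg p.2 = m := by rw [hm, ← hp, mdeg_add]
      omega
    congr 1
    set q := p.1 with hqdef
    have hq0 : q 0 < m := by have := q0_le_mdeg q; omega
    have hq1 : q 1 < m := by have := q0_le_mdeg q; omega
    rw [hG, map_sum]
    rw [Finset.sum_eq_single (q 0)]
    · rw [map_sum, Finset.sum_eq_single (q 1 + 1)]
      · rw [MvPowerSeries.coeff_monomial, if_pos (by rw [Nat.add_sub_cancel]; exact fin2_decomp q)]
        rw [coeff_pd]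
        have hqq : q + Finsupp.single 1 1 = Finsupp.single 0 (q 0) + Finsupp.single 1 (q 1 + 1) := by
          ext ii; fin_cases ii <;> simp [Finsupp.single_apply]
        rw [hqq]
        push_cast; ring
      · intro j _ hne
        rw [MvPowerSeries.coeff_monomial]
        by_cases h : q = Finsupp.single 0 (q 0) + Finsupp.single 1 (j - 1)
        · have h1 : q 1 = j - 1 := (congrArg (fun z : Fin 2 →₀ ℕ => z 1) h).trans (pair_app1 _ _)
          have hj0 : j = 0 := by omega
          rw [if_pos h, hj0, Nat.cast_zero, mul_zero]
        · rw [if_neg h]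
      · intro h; exact absurd (Finset.mem_range.mpr (by omega)) h
    · intro i _ hne
      rw [map_sum]
      apply Finset.sum_eq_zero; intro j _
      rw [MvPowerSeries.coeff_monomial, if_neg]
      intro h
      exact hne ((congrArg (fun z : Fin 2 →₀ ℕ => z 0) h).trans (pair_app0 _ _)).symm
    · intro h; exact absurd (Finset.mem_range.mpr (by omega)) h

end sums

section main
open MvPowerSeries Finset

lemma comp_key {ν n : ℕ} (hn : 2 ≤ n) {f u v : MvPowerSeries (Fin 2) ℂ}
    (hf : ordGE ν f) (hu : ordGE n u) (hv : ordGE n v) :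
    ordGE (ν + n) (compPS (MvPowerSeries.X 0 + u) (MvPowerSeries.X 1 + v) f - f
      - pd 0 f * u - pd 1 f * v) := by
  intro d hd
  rw [map_sub, map_sub, map_sub, coeff_compPS]
  have hterm : ∀ i ∈ range (mdeg d + 1), ∀ j ∈ range (mdeg d + 1),
      MvPowerSeries.coeff (Finsupp.single 0 i + Finsupp.single 1 j) f *
        MvPowerSeries.coeff d ((MvPowerSeries.X 0 + u) ^ i * (MvPowerSeries.X 1 + v) ^ j)
      = MvPowerSeries.coeff (Finsupp.single 0 i + Finsupp.single 1 j) f *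
          MvPowerSeries.coeff d
            (MvPowerSeries.monomial (Finsupp.single 0 i + Finsupp.single 1 j) (1 : ℂ))
        + MvPowerSeries.coeff (Finsupp.single 0 i + Finsupp.single 1 j) f *
          MvPowerSeries.coeff d
            (MvPowerSeries.monomial (Finsupp.single 0 (i-1) + Finsupp.single 1 j) ((i : ℂ)) * u)
        + MvPowerSeries.coeff (Finsupp.single 0 i + Finsupp.single 1 j) f *
          MvPowerSeries.coeff d
            (MvPowerSeries.monomial (Finsupp.single 0 i + Finsupp.single 1 (j-1)) ((j : ℂ)) * v) := by
    intro i _ j _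
    by_cases hc : MvPowerSeries.coeff (Finsupp.single 0 i + Finsupp.single 1 j) f = 0
    · rw [hc]; ring
    · have hij : ν ≤ i + j := by
        by_contra hlt
        exact hc (hf _ (by rw [mdeg_add, mdeg_single, mdeg_single]; omega))
      have h0 := prod_expand hn hu hv i j d (by omega)
      rw [map_sub, map_sub, map_sub] at h0
      have h1 : MvPowerSeries.coeff d ((MvPowerSeries.X 0 + u) ^ i * (MvPowerSeries.X 1 + v) ^ j)
          = MvPowerSeries.coeff d
              (MvPowerSeries.monomial (Finsupp.single 0 i + Finsupp.single 1 j) (1 : ℂ))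
            + MvPowerSeries.coeff d
              (MvPowerSeries.monomial (Finsupp.single 0 (i-1) + Finsupp.single 1 j) ((i : ℂ)) * u)
            + MvPowerSeries.coeff d
              (MvPowerSeries.monomial (Finsupp.single 0 i + Finsupp.single 1 (j-1)) ((j : ℂ)) * v) := by
        linear_combination h0
      rw [h1]; ring
  rw [Finset.sum_congr rfl (fun i hi => Finset.sum_congr rfl (fun j hj => hterm i hi j hj))]
  simp only [Finset.sum_add_distrib]
  rw [sum_M00, sum_M10 (by omega) hu, sum_M01 (by omega) hv]
  ring

end main

/-- Let `ω = P dx + Q dy`, `ω' = P' dx + Q' dy` have coefficients of order `≥ ν`, and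
let `Φ = (x + a + r₁, y + b + r₂)` be a formal diffeomorphism tangent to the identity
whose lowest nonidentity homogeneous component `Φⁿ = (a, b)` has degree `n ≥ 2`
(`r₁, r₂` of order `≥ n + 1`).  Then, identifying 2-forms with their `dx ∧ dy`
coefficients, `Φ*ω ∧ ω' - ω ∧ ω' - (L_{∂Φⁿ} ω^ν) ∧ ω'^ν` has order `≥ n + 2ν`,
where `ω^ν, ω'^ν` are the lowest (degree-`ν`) homogeneous parts,
`∂Φⁿ = a ∂ₓ + b ∂_y`, and
`L_X(Pdx+Qdy) = (aP_x + bP_y + P a_x + Q b_x)dx + (aQ_x + bQ_y + P a_y + Q b_y)dy`. -/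
theorem stmt3 (ν n : ℕ) (hn : 2 ≤ n)
    (P Q P' Q' a b r₁ r₂ : MvPowerSeries (Fin 2) ℂ)
    (hP : ordGE ν P) (hQ : ordGE ν Q) (hP' : ordGE ν P') (hQ' : ordGE ν Q')
    (ha : isHomogPS n a) (hb : isHomogPS n b) (hab : ¬(a = 0 ∧ b = 0))
    (hr₁ : ordGE (n + 1) r₁) (hr₂ : ordGE (n + 1) r₂) :
    let φ : MvPowerSeries (Fin 2) ℂ := MvPowerSeries.X 0 + a + r₁
    let ψ : MvPowerSeries (Fin 2) ℂ := MvPowerSeries.X 1 + b + r₂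
    -- coefficients of the pulled-back 1-form `Φ*ω = (P∘Φ)dφ + (Q∘Φ)dψ`
    let A := compPS φ ψ P * pd 0 φ + compPS φ ψ Q * pd 0 ψ
    let B := compPS φ ψ P * pd 1 φ + compPS φ ψ Q * pd 1 ψ
    -- dx-, dy- coefficients of the Lie derivative `L_{∂Φⁿ} ω^ν`
    let L₁ := a * pd 0 (hpart ν P) + b * pd 1 (hpart ν P) +
      hpart ν P * pd 0 a + hpart ν Q * pd 0 b
    let L₂ := a * pd 0 (hpart ν Q) + b * pd 1 (hpart ν Q) +
      hpart ν P * pd 1 a + hpart ν Q * pd 1 b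
    ordGE (n + 2 * ν)
      ((A * Q' - B * P') - (P * Q' - Q * P') - (L₁ * hpart ν Q' - L₂ * hpart ν P')) := by
  intro φ ψ A B L₁ L₂
  have hu : ordGE n (a + r₁) := ordGE_add (ordGE_of_homog ha) (ordGE_mono (by omega) hr₁)
  have hv : ordGE n (b + r₂) := ordGE_add (ordGE_of_homog hb) (ordGE_mono (by omega) hr₂)
  have hφeq : φ = MvPowerSeries.X 0 + (a + r₁) := add_assoc _ _ _
  have hψeq : ψ = MvPowerSeries.X 1 + (b + r₂) := add_assoc _ _ _
  have hE₁ : ordGE (ν + n)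
      (compPS φ ψ P - P - pd 0 P * (a + r₁) - pd 1 P * (b + r₂)) := by
    rw [hφeq, hψeq]; exact comp_key hn hP hu hv
  have hE₂ : ordGE (ν + n)
      (compPS φ ψ Q - Q - pd 0 Q * (a + r₁) - pd 1 Q * (b + r₂)) := by
    rw [hφeq, hψeq]; exact comp_key hn hQ hu hv
  have hφ0 : pd 0 φ = 1 + pd 0 a + pd 0 r₁ := by
    show pd 0 (MvPowerSeries.X 0 + a + r₁) = _
    rw [pd_add, pd_add, pd_X_self]
  have hφ1 : pd 1 φ = pd 1 a + pd 1 r₁ := by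
    show pd 1 (MvPowerSeries.X 0 + a + r₁) = _
    rw [pd_add, pd_add, pd_X_ne (by decide), zero_add]
  have hψ0 : pd 0 ψ = pd 0 b + pd 0 r₂ := by
    show pd 0 (MvPowerSeries.X 1 + b + r₂) = _
    rw [pd_add, pd_add, pd_X_ne (by decide), zero_add]
  have hψ1 : pd 1 ψ = 1 + pd 1 b + pd 1 r₂ := by
    show pd 1 (MvPowerSeries.X 1 + b + r₂) = _
    rw [pd_add, pd_add, pd_X_self]
  -- order bounds on pieces
  have hpa0 : ordGE (n - 1) (pd 0 a) := ordGE_pd 0 (ordGE_of_homog ha)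
  have hpa1 : ordGE (n - 1) (pd 1 a) := ordGE_pd 1 (ordGE_of_homog ha)
  have hpb0 : ordGE (n - 1) (pd 0 b) := ordGE_pd 0 (ordGE_of_homog hb)
  have hpb1 : ordGE (n - 1) (pd 1 b) := ordGE_pd 1 (ordGE_of_homog hb)
  have hpr₁0 : ordGE n (pd 0 r₁) := ordGE_mono (by omega) (ordGE_pd 0 hr₁)
  have hpr₁1 : ordGE n (pd 1 r₁) := ordGE_mono (by omega) (ordGE_pd 1 hr₁)
  have hpr₂0 : ordGE n (pd 0 r₂) := ordGE_mono (by omega) (ordGE_pd 0 hr₂)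
  have hpr₂1 : ordGE n (pd 1 r₂) := ordGE_mono (by omega) (ordGE_pd 1 hr₂)
  have hcompP : ordGE ν (compPS φ ψ P) := by
    have hh : compPS φ ψ P = P + pd 0 P * (a + r₁) + pd 1 P * (b + r₂) +
        (compPS φ ψ P - P - pd 0 P * (a + r₁) - pd 1 P * (b + r₂)) := by ring
    rw [hh]
    exact ordGE_add (ordGE_add (ordGE_add hP
      (ordGE_mul' (by omega) (ordGE_pd 0 hP) hu))
      (ordGE_mul' (by omega) (ordGE_pd 1 hP) hv))
      (ordGE_mono (by omega) hE₁)
  have hcompQ : ordGE ν (compPS φ ψ Q) := by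
    have hh : compPS φ ψ Q = Q + pd 0 Q * (a + r₁) + pd 1 Q * (b + r₂) +
        (compPS φ ψ Q - Q - pd 0 Q * (a + r₁) - pd 1 Q * (b + r₂)) := by ring
    rw [hh]
    exact ordGE_add (ordGE_add (ordGE_add hQ
      (ordGE_mul' (by omega) (ordGE_pd 0 hQ) hu))
      (ordGE_mul' (by omega) (ordGE_pd 1 hQ) hv))
      (ordGE_mono (by omega) hE₂)
  have hcompPsub : ordGE (ν + n - 1) (compPS φ ψ P - P) := by
    have hh : compPS φ ψ P - P = pd 0 P * (a + r₁) + pd 1 P * (b + r₂) +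
        (compPS φ ψ P - P - pd 0 P * (a + r₁) - pd 1 P * (b + r₂)) := by ring
    rw [hh]
    exact ordGE_add (ordGE_add
      (ordGE_mul' (by omega) (ordGE_pd 0 hP) hu)
      (ordGE_mul' (by omega) (ordGE_pd 1 hP) hv))
      (ordGE_mono (by omega) hE₁)
  have hcompQsub : ordGE (ν + n - 1) (compPS φ ψ Q - Q) := by
    have hh : compPS φ ψ Q - Q = pd 0 Q * (a + r₁) + pd 1 Q * (b + r₂) +
        (compPS φ ψ Q - Q - pd 0 Q * (a + r₁) - pd 1 Q * (b + r₂)) := by ring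
    rw [hh]
    exact ordGE_add (ordGE_add
      (ordGE_mul' (by omega) (ordGE_pd 0 hQ) hu)
      (ordGE_mul' (by omega) (ordGE_pd 1 hQ) hv))
      (ordGE_mono (by omega) hE₂)
  have hPsub : ordGE ν (pd 0 P - pd 0 (hpart ν P)) := by
    rw [← pd_sub]; exact ordGE_mono (by omega) (ordGE_pd 0 (ordGE_sub_hpart hP))
  have hPsub1 : ordGE ν (pd 1 P - pd 1 (hpart ν P)) := by
    rw [← pd_sub]; exact ordGE_mono (by omega) (ordGE_pd 1 (ordGE_sub_hpart hP))
  have hQsub : ordGE ν (pd 0 Q - pd 0 (hpart ν Q)) := by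
    rw [← pd_sub]; exact ordGE_mono (by omega) (ordGE_pd 0 (ordGE_sub_hpart hQ))
  have hQsub1 : ordGE ν (pd 1 Q - pd 1 (hpart ν Q)) := by
    rw [← pd_sub]; exact ordGE_mono (by omega) (ordGE_pd 1 (ordGE_sub_hpart hQ))
  -- the dx-coefficient estimate
  have hEA : A - P - L₁ =
      a * (pd 0 P - pd 0 (hpart ν P)) + pd 0 P * r₁
      + b * (pd 1 P - pd 1 (hpart ν P)) + pd 1 P * r₂
      + (compPS φ ψ P - P - pd 0 P * (a + r₁) - pd 1 P * (b + r₂))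
      + compPS φ ψ P * pd 0 r₁
      + (compPS φ ψ P - P) * pd 0 a
      + (P - hpart ν P) * pd 0 a
      + compPS φ ψ Q * pd 0 r₂
      + (compPS φ ψ Q - Q) * pd 0 b
      + (Q - hpart ν Q) * pd 0 b := by
    have hAd : A = compPS φ ψ P * pd 0 φ + compPS φ ψ Q * pd 0 ψ := rfl
    have hL₁d : L₁ = a * pd 0 (hpart ν P) + b * pd 1 (hpart ν P) +
      hpart ν P * pd 0 a + hpart ν Q * pd 0 b := rfl
    rw [hAd, hL₁d, hφ0, hψ0]; ring
  have hEAord : ordGE (ν + n) (A - P - L₁) := by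
    rw [hEA]
    refine ordGE_add (ordGE_add (ordGE_add (ordGE_add (ordGE_add (ordGE_add (ordGE_add
      (ordGE_add (ordGE_add (ordGE_add ?_ ?_) ?_) ?_) ?_) ?_) ?_) ?_) ?_) ?_) ?_
    · exact ordGE_mul' (by omega) (ordGE_of_homog ha) hPsub
    · exact ordGE_mul' (by omega) (ordGE_pd 0 hP) hr₁
    · exact ordGE_mul' (by omega) (ordGE_of_homog hb) hPsub1
    · exact ordGE_mul' (by omega) (ordGE_pd 1 hP) hr₂
    · exact hE₁
    · exact ordGE_mul' (by omega) hcompP hpr₁0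
    · exact ordGE_mul' (by omega) hcompPsub hpa0
    · exact ordGE_mul' (by omega) (ordGE_sub_hpart hP) hpa0
    · exact ordGE_mul' (by omega) hcompQ hpr₂0
    · exact ordGE_mul' (by omega) hcompQsub hpb0
    · exact ordGE_mul' (by omega) (ordGE_sub_hpart hQ) hpb0
  -- the dy-coefficient estimate
  have hEB : B - Q - L₂ =
      a * (pd 0 Q - pd 0 (hpart ν Q)) + pd 0 Q * r₁
      + b * (pd 1 Q - pd 1 (hpart ν Q)) + pd 1 Q * r₂
      + (compPS φ ψ Q - Q - pd 0 Q * (a + r₁) - pd 1 Q * (b + r₂))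
      + compPS φ ψ Q * pd 1 r₂
      + (compPS φ ψ Q - Q) * pd 1 b
      + (Q - hpart ν Q) * pd 1 b
      + compPS φ ψ P * pd 1 r₁
      + (compPS φ ψ P - P) * pd 1 a
      + (P - hpart ν P) * pd 1 a := by
    have hBd : B = compPS φ ψ P * pd 1 φ + compPS φ ψ Q * pd 1 ψ := rfl
    have hL₂d : L₂ = a * pd 0 (hpart ν Q) + b * pd 1 (hpart ν Q) +
      hpart ν P * pd 1 a + hpart ν Q * pd 1 b := rfl
    rw [hBd, hL₂d, hφ1, hψ1]; ring
  have hEBord : ordGE (ν + n) (B - Q - L₂) := by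
    rw [hEB]
    refine ordGE_add (ordGE_add (ordGE_add (ordGE_add (ordGE_add (ordGE_add (ordGE_add
      (ordGE_add (ordGE_add (ordGE_add ?_ ?_) ?_) ?_) ?_) ?_) ?_) ?_) ?_) ?_) ?_
    · exact ordGE_mul' (by omega) (ordGE_of_homog ha) hQsub
    · exact ordGE_mul' (by omega) (ordGE_pd 0 hQ) hr₁
    · exact ordGE_mul' (by omega) (ordGE_of_homog hb) hQsub1
    · exact ordGE_mul' (by omega) (ordGE_pd 1 hQ) hr₂
    · exact hE₂
    · exact ordGE_mul' (by omega) hcompQ hpr₂1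
    · exact ordGE_mul' (by omega) hcompQsub hpb1
    · exact ordGE_mul' (by omega) (ordGE_sub_hpart hQ) hpb1
    · exact ordGE_mul' (by omega) hcompP hpr₁1
    · exact ordGE_mul' (by omega) hcompPsub hpa1
    · exact ordGE_mul' (by omega) (ordGE_sub_hpart hP) hpa1
  -- order of the Lie-derivative coefficients
  have hL₁ord : ordGE (n + ν - 1) L₁ := by
    show ordGE (n + ν - 1) (a * pd 0 (hpart ν P) + b * pd 1 (hpart ν P) +
      hpart ν P * pd 0 a + hpart ν Q * pd 0 b)
    refine ordGE_add (ordGE_add (ordGE_add ?_ ?_) ?_) ?_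
    · exact ordGE_mul' (by omega) (ordGE_of_homog ha) (ordGE_pd 0 (ordGE_hpart ν P))
    · exact ordGE_mul' (by omega) (ordGE_of_homog hb) (ordGE_pd 1 (ordGE_hpart ν P))
    · exact ordGE_mul' (by omega) (ordGE_hpart ν P) hpa0
    · exact ordGE_mul' (by omega) (ordGE_hpart ν Q) hpb0
  have hL₂ord : ordGE (n + ν - 1) L₂ := by
    show ordGE (n + ν - 1) (a * pd 0 (hpart ν Q) + b * pd 1 (hpart ν Q) +
      hpart ν P * pd 1 a + hpart ν Q * pd 1 b)
    refine ordGE_add (ordGE_add (ordGE_add ?_ ?_) ?_) ?_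
    · exact ordGE_mul' (by omega) (ordGE_of_homog ha) (ordGE_pd 0 (ordGE_hpart ν Q))
    · exact ordGE_mul' (by omega) (ordGE_of_homog hb) (ordGE_pd 1 (ordGE_hpart ν Q))
    · exact ordGE_mul' (by omega) (ordGE_hpart ν P) hpa1
    · exact ordGE_mul' (by omega) (ordGE_hpart ν Q) hpb1
  -- final assembly
  have hGE : (A * Q' - B * P') - (P * Q' - Q * P') - (L₁ * hpart ν Q' - L₂ * hpart ν P')
      = (A - P - L₁) * Q' - (B - Q - L₂) * P'
        + L₁ * (Q' - hpart ν Q') - L₂ * (P' - hpart ν P') := by ring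
  rw [hGE]
  refine ordGE_sub (ordGE_add (ordGE_sub ?_ ?_) ?_) ?_
  · exact ordGE_mul' (by omega) hEAord hQ'
  · exact ordGE_mul' (by omega) hEBord hP'
  · exact ordGE_mul' (by omega) hL₁ord (ordGE_sub_hpart hQ')
  · exact ordGE_mul' (by omega) hL₂ord (ordGE_sub_hpart hP')
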